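/- arXiv:1107.2455 — 2 statements merged into one kernel-verified Lean document; each statement's English description precedes it below -/
import Mathlib

section
/- Let B be an open ball in ℝ³, let y₀ ∈ closure(B), and let δ > 0. Then liminf_{τ→∞} τ³ ∫_{B ∩ B_δ(y₀)} e^{−τ|y−y₀|} dy > 0, where the integral is with respect to Lebesgue measure and B_δ(y₀) is the open ball of radius δ centered at y₀. -/
open MeasureTheory Real Filter

/-- Claim 3 of Lemma 2.2: the localized Laplace-type integral over an open ball
decays no faster than `τ⁻³`, i.e. `liminf_{τ→∞} τ³ ∫_{B ∩ B_δ(y₀)} e^{-τ|y-y₀|} dy > 0`. -/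
theorem laplace_integral_ball_lower_bound
    (x₀ : EuclideanSpace ℝ (Fin 3)) (r : ℝ) (hr : 0 < r)
    (y₀ : EuclideanSpace ℝ (Fin 3)) (hy₀ : y₀ ∈ closure (Metric.ball x₀ r))
    (δ : ℝ) (hδ : 0 < δ) :
    ∃ c : ℝ, 0 < c ∧ ∀ᶠ τ : ℝ in atTop,
      c ≤ τ ^ 3 * ∫ y in Metric.ball x₀ r ∩ Metric.ball y₀ δ,
            Real.exp (-τ * dist y y₀) := by
  have hd : dist y₀ x₀ ≤ r := by
    rwa [closure_ball x₀ hr.ne', Metric.mem_closedBall] at hy₀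
  set V : ℝ := (volume (Metric.ball (0 : EuclideanSpace ℝ (Fin 3)) 1)).toReal with hV
  have hVpos : 0 < V :=
    ENNReal.toReal_pos (Metric.measure_ball_pos volume 0 one_pos).ne' measure_ball_lt_top.ne
  refine ⟨Real.exp (-(3/2)) * (1/2)^3 * V, by positivity, ?_⟩
  filter_upwards [eventually_ge_atTop (max (1/r) (2/δ)), eventually_gt_atTop 0]
    with τ hτ hτ0
  have hτr : 1/r ≤ τ := le_trans (le_max_left _ _) hτ
  have hτδ : 2/δ ≤ τ := le_trans (le_max_right _ _) hτ
  set t : ℝ := 1/τ with ht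
  have htpos : 0 < t := by positivity
  have htr : t ≤ r := by
    have h1 : 1 ≤ τ * r := (div_le_iff₀ hr).mp hτr
    rw [ht, div_le_iff₀ hτ0]
    linarith [mul_comm τ r]
  have htδ : 3/2 * t < δ := by
    have h1 : 2 ≤ τ * δ := (div_le_iff₀ hδ).mp hτδ
    have : t ≤ δ/2 := by
      rw [ht, div_le_iff₀ hτ0]
      nlinarith
    nlinarith
  set z : EuclideanSpace ℝ (Fin 3) := y₀ + (t/r) • (x₀ - y₀) with hz
  have hzx : dist z x₀ ≤ r - t := by
    have hzs : z - x₀ = (1 - t/r) • (y₀ - x₀) := by rw [hz]; module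
    have h1 : ‖y₀ - x₀‖ ≤ r := by rw [← dist_eq_norm]; exact hd
    have h2 : (0:ℝ) ≤ 1 - t/r := by
      have : t/r ≤ 1 := (div_le_one hr).mpr htr
      linarith
    have h3 : (1 - t/r) * r = r - t := by field_simp
    rw [dist_eq_norm, hzs, norm_smul, Real.norm_eq_abs, abs_of_nonneg h2]
    nlinarith [norm_nonneg (y₀ - x₀), mul_le_mul_of_nonneg_left h1 h2]
  have hzy : dist z y₀ ≤ t := by
    have hzs : z - y₀ = (t/r) • (x₀ - y₀) := by rw [hz]; module
    have h1 : ‖x₀ - y₀‖ ≤ r := by rw [← dist_eq_norm, dist_comm]; exact hd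
    have h2 : (0:ℝ) ≤ t/r := by positivity
    rw [dist_eq_norm, hzs, norm_smul, Real.norm_eq_abs, abs_of_nonneg h2]
    calc t/r * ‖x₀ - y₀‖ ≤ t/r * r := by nlinarith
    _ = t := by field_simp
  have hsub : Metric.ball z (t/2) ⊆ Metric.ball x₀ r ∩ Metric.ball y₀ δ := by
    intro w hw
    rw [Metric.mem_ball] at hw
    constructor
    · rw [Metric.mem_ball]
      calc dist w x₀ ≤ dist w z + dist z x₀ := dist_triangle _ _ _
      _ < t/2 + (r - t) := by linarith
      _ < r := by linarith
    · rw [Metric.mem_ball]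
      calc dist w y₀ ≤ dist w z + dist z y₀ := dist_triangle _ _ _
      _ < t/2 + t := by linarith
      _ < δ := by linarith
  set f : EuclideanSpace ℝ (Fin 3) → ℝ := fun y => Real.exp (-τ * dist y y₀) with hf
  have hfc : Continuous f := by fun_prop
  have hμS : volume (Metric.ball x₀ r ∩ Metric.ball y₀ δ) < ⊤ :=
    lt_of_le_of_lt (measure_mono Set.inter_subset_left) measure_ball_lt_top
  have hfi : IntegrableOn f (Metric.ball x₀ r ∩ Metric.ball y₀ δ) volume := by
    apply Measure.integrableOn_of_bounded hμS.ne hfc.aestronglyMeasurable (M := 1)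
    filter_upwards with y
    have hd0 : (0:ℝ) ≤ dist y y₀ := dist_nonneg
    rw [Real.norm_eq_abs, abs_of_nonneg (Real.exp_nonneg _)]
    exact Real.exp_le_one_iff.mpr (by nlinarith)
  have hfi' : IntegrableOn f (Metric.ball z (t/2)) volume := hfi.mono_set hsub
  have hbound : Real.exp (-(3/2)) * (volume (Metric.ball z (t/2))).toReal
      ≤ ∫ y in Metric.ball z (t/2), f y := by
    apply setIntegral_ge_of_const_le_real measurableSet_ball measure_ball_lt_top.ne _ hfi'
    intro y hy
    rw [Metric.mem_ball] at hy
    apply Real.exp_le_exp.mpr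
    have hyd : dist y y₀ ≤ 3/2 * t := by
      calc dist y y₀ ≤ dist y z + dist z y₀ := dist_triangle _ _ _
      _ ≤ t/2 + t := by linarith
      _ = 3/2 * t := by ring
    have hτt : τ * t = 1 := by rw [ht]; field_simp
    have hd0 : (0:ℝ) ≤ dist y y₀ := dist_nonneg
    nlinarith
  have hmono : (∫ y in Metric.ball z (t/2), f y)
      ≤ ∫ y in Metric.ball x₀ r ∩ Metric.ball y₀ δ, f y := by
    apply setIntegral_mono_set hfi
    · filter_upwards with y using Real.exp_nonneg _
    · exact HasSubset.Subset.eventuallyLE hsub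
  have hvol : (volume (Metric.ball z (t/2))).toReal = (t/2)^3 * V := by
    rw [Measure.addHaar_ball volume z (by positivity : (0:ℝ) ≤ t/2)]
    rw [ENNReal.toReal_mul, ENNReal.toReal_ofReal (by positivity), hV]
    norm_num [finrank_euclideanSpace]
  have hfinal : Real.exp (-(3/2)) * (1/2)^3 * V
      = τ^3 * (Real.exp (-(3/2)) * (t/2)^3 * V) := by
    rw [ht]; field_simp
  calc Real.exp (-(3/2)) * (1/2)^3 * V
      = τ^3 * (Real.exp (-(3/2)) * (volume (Metric.ball z (t/2))).toReal) := by
        rw [hvol, hfinal]; ring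
    _ ≤ τ^3 * ∫ y in Metric.ball x₀ r ∩ Metric.ball y₀ δ, f y := by
        apply mul_le_mul_of_nonneg_left (le_trans hbound hmono) (by positivity)
end

section
/- Let Ω be a bounded open subset of ℝ³, let D be a nonempty open set with closure(D) ⊂ Ω, and let B be a nonempty bounded open set with closure(B) ∩ closure(Ω) = ∅. Then inf{ |x−y| + |y−z| : x ∈ ∂B, y ∈ ∂D, z ∈ ∂Ω } ≤ 2·dist(D,B) − dist(Ω,B), where dist(E,F) = inf{|x−y| : x ∈ E, y ∈ F} and ∂E denotes the topological boundary of E. -/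
open Set Metric

lemma cross_frontier {X : Type*} [TopologicalSpace X] {s t : Set X}
    (hs : IsPreconnected s) (h1 : (s ∩ t).Nonempty) (h2 : (s \ t).Nonempty) :
    (s ∩ frontier t).Nonempty := by
  by_contra h
  rw [Set.not_nonempty_iff_eq_empty] at h
  have hsub : s ⊆ interior t ∪ (closure t)ᶜ := by
    intro x hx
    have hxf : x ∉ frontier t := fun hf => (Set.eq_empty_iff_forall_notMem.1 h x) ⟨hx, hf⟩
    by_cases hc : x ∈ closure t
    · left
      have : ¬(x ∈ closure t ∧ x ∉ interior t) := by
        intro hx'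
        exact hxf (Set.mem_diff x |>.2 hx')
      push_neg at this
      exact this hc
    · right; exact hc
  rcases hs.subset_or_subset isOpen_interior (isClosed_closure.isOpen_compl)
      (disjoint_compl_right.mono_left (interior_subset.trans subset_closure)) hsub with h' | h'
  · obtain ⟨b, hbs, hbt⟩ := h2
    exact hbt (interior_subset (h' hbs))
  · obtain ⟨a, has, hat⟩ := h1
    exact h' has (subset_closure hat)

noncomputable def setDist (A C : Set (EuclideanSpace ℝ (Fin 3))) : ℝ :=
  sInf {d | ∃ x ∈ A, ∃ y ∈ C, d = dist x y}

lemma setDist_bddBelow (A C : Set (EuclideanSpace ℝ (Fin 3))) :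
    BddBelow {d | ∃ x ∈ A, ∃ y ∈ C, d = dist x y} := by
  refine ⟨0, fun d hd => ?_⟩
  obtain ⟨x, _, y, _, rfl⟩ := hd
  exact dist_nonneg

lemma setDist_le_of_mem_closure {A C : Set (EuclideanSpace ℝ (Fin 3))}
    {z x : EuclideanSpace ℝ (Fin 3)} (hz : z ∈ closure A) (hx : x ∈ closure C) :
    setDist A C ≤ dist z x := by
  apply le_of_forall_pos_le_add
  intro ε hε
  obtain ⟨p, hp, hpz⟩ := Metric.mem_closure_iff.1 hz (ε / 2) (by linarith)
  obtain ⟨q, hq, hqx⟩ := Metric.mem_closure_iff.1 hx (ε / 2) (by linarith)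
  have h1 : setDist A C ≤ dist p q :=
    csInf_le (setDist_bddBelow A C) ⟨p, hp, q, hq, rfl⟩
  have h2 : dist p q ≤ dist p z + dist z x + dist x q := dist_triangle4 p z x q
  have := dist_comm z p
  have := dist_comm x q
  linarith [dist_triangle4 p z x q]

theorem boundary_path_length_bound
    (Ω D B : Set (EuclideanSpace ℝ (Fin 3)))
    (hΩopen : IsOpen Ω) (hΩbdd : Bornology.IsBounded Ω)
    (hDopen : IsOpen D) (hDne : D.Nonempty) (hDΩ : closure D ⊆ Ω)
    (hBopen : IsOpen B) (hBne : B.Nonempty) (hBbdd : Bornology.IsBounded B)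
    (hBΩ : closure B ∩ closure Ω = ∅) :
    sInf {l | ∃ x ∈ frontier B, ∃ y ∈ frontier D, ∃ z ∈ frontier Ω,
        l = dist x y + dist y z}
      ≤ 2 * setDist D B - setDist Ω B := by
  have hdis : ∀ a, a ∈ closure B → a ∉ closure Ω := by
    intro a ha hb
    exact (Set.eq_empty_iff_forall_notMem.1 hBΩ a) ⟨ha, hb⟩
  apply le_of_forall_pos_le_add
  intro ε hε
  -- pick near-optimal pair for setDist D B
  have hne : {d | ∃ x ∈ D, ∃ y ∈ B, d = dist x y}.Nonempty := by
    obtain ⟨p, hp⟩ := hDne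
    obtain ⟨q, hq⟩ := hBne
    exact ⟨dist p q, p, hp, q, hq, rfl⟩
  obtain ⟨d, hd, hdlt⟩ := Real.lt_sInf_add_pos hne (show (0:ℝ) < ε / 2 by linarith)
  obtain ⟨x₀, hx₀, y₀, hy₀, rfl⟩ := hd
  -- first segment from x₀ ∈ D to y₀ ∈ B
  have hseg1 : IsPreconnected (segment ℝ x₀ y₀) := (convex_segment x₀ y₀).isPreconnected
  have hy₀D : y₀ ∉ D := fun h =>
    hdis y₀ (subset_closure hy₀) (subset_closure (hDΩ (subset_closure h)))
  have hx₀B : x₀ ∉ B := fun h =>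
    hdis x₀ (subset_closure h) (subset_closure (hDΩ (subset_closure hx₀)))
  obtain ⟨y, hyseg, hyD⟩ := cross_frontier hseg1
    ⟨x₀, left_mem_segment ℝ x₀ y₀, hx₀⟩ ⟨y₀, right_mem_segment ℝ x₀ y₀, hy₀D⟩
  obtain ⟨x, hxseg, hxB⟩ := cross_frontier hseg1
    ⟨y₀, right_mem_segment ℝ x₀ y₀, hy₀⟩ ⟨x₀, left_mem_segment ℝ x₀ y₀, hx₀B⟩
  -- dist x y ≤ dist x₀ y₀ via diameter of the segment
  have hediam : Metric.ediam (segment ℝ x₀ y₀) = edist x₀ y₀ := by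
    rw [← convexHull_pair, convexHull_ediam, Metric.ediam_pair]
  have hdiam : Metric.diam (segment ℝ x₀ y₀) = dist x₀ y₀ := by
    rw [← convexHull_pair, convexHull_diam, Metric.diam_pair]
  have hxy : dist x y ≤ dist x₀ y₀ := by
    have := Metric.dist_le_diam_of_mem' (by rw [hediam]; exact edist_ne_top _ _) hxseg hyseg
    rwa [hdiam] at this
  -- second segment from y ∈ frontier D ⊆ Ω to x ∈ frontier B
  have hyΩ : y ∈ Ω := hDΩ hyD.1
  have hxΩ : x ∉ Ω := fun h => hdis x hxB.1 (subset_closure h)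
  have hseg2 : IsPreconnected (segment ℝ y x) := (convex_segment y x).isPreconnected
  obtain ⟨z, hzseg, hzΩ⟩ := cross_frontier hseg2
    ⟨y, left_mem_segment ℝ y x, hyΩ⟩ ⟨x, right_mem_segment ℝ y x, hxΩ⟩
  have hsum : dist y z + dist z x = dist y x := dist_add_dist_of_mem_segment hzseg
  -- lower bound on dist z x
  have hzx : setDist Ω B ≤ dist z x := setDist_le_of_mem_closure hzΩ.1 hxB.1
  -- membership in target set
  have hmem : dist x y + dist y z ∈ {l | ∃ x ∈ frontier B, ∃ y ∈ frontier D,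
      ∃ z ∈ frontier Ω, l = dist x y + dist y z} := ⟨x, hxB, y, hyD, z, hzΩ, rfl⟩
  have hbdd : BddBelow {l | ∃ x ∈ frontier B, ∃ y ∈ frontier D,
      ∃ z ∈ frontier Ω, l = dist x y + dist y z} := by
    refine ⟨0, fun l hl => ?_⟩
    obtain ⟨a, _, b, _, c, _, rfl⟩ := hl
    positivity
  have hle : sInf {l | ∃ x ∈ frontier B, ∃ y ∈ frontier D, ∃ z ∈ frontier Ω,
      l = dist x y + dist y z} ≤ dist x y + dist y z := csInf_le hbdd hmem
  have hyx : dist y x = dist x y := dist_comm y x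
  -- combine: dist x y + dist y z = 2 dist x y − dist z x
  have : dist x y + dist y z ≤ 2 * setDist D B - setDist Ω B + ε := by
    have : dist y z = dist x y - dist z x := by linarith
    have hxy' : dist x y < setDist D B + ε / 2 := lt_of_le_of_lt hxy hdlt
    unfold setDist
    unfold setDist at hzx hxy'
    linarith
  linarith
end
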